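/- Let p ≥ 2 be real and c, d real numbers with c ≥ d. Using the signed power notation a^r := |a|^{r-1}a, one has c^{p-1} - d^{p-1} ≥ 2^{2-p} (c-d)^{p-1}. -/
import Mathlib


open Real

/-- Signed power: `a^r := |a|^(r-1) * a`. -/
noncomputable def spow (a r : ℝ) : ℝ := |a| ^ (r - 1) * a

lemma my_pow_mean {a b q : ℝ} (ha : 0 ≤ a) (hb : 0 ≤ b) (hq : 1 ≤ q) :
    (a + b) ^ q ≤ 2 ^ (q - 1) * (a ^ q + b ^ q) := by
  lift a to NNReal using ha
  lift b to NNReal using hb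
  exact_mod_cast NNReal.rpow_add_le_mul_rpow_add_rpow a b hq

lemma my_superadd {a b q : ℝ} (ha : 0 ≤ a) (hb : 0 ≤ b) (hq : 1 ≤ q) :
    a ^ q + b ^ q ≤ (a + b) ^ q := by
  lift a to NNReal using ha
  lift b to NNReal using hb
  exact_mod_cast NNReal.add_rpow_le_rpow_add a b hq

lemma spow_of_nonneg {a q : ℝ} (ha : 0 ≤ a) (hq : 1 ≤ q) : spow a q = a ^ q := by
  unfold spow
  rw [abs_of_nonneg ha]
  rcases eq_or_lt_of_le ha with h | h
  · subst h
    rw [mul_zero, Real.zero_rpow (ne_of_gt (show (0:ℝ) < q by linarith))]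
  · rw [← Real.rpow_add_one (ne_of_gt h), sub_add_cancel]

lemma spow_of_nonpos {a q : ℝ} (ha : a ≤ 0) (hq : 1 ≤ q) : spow a q = -(|a| ^ q) := by
  have h := spow_of_nonneg (neg_nonneg.2 ha) hq
  unfold spow at h ⊢
  rw [abs_neg] at h
  rw [abs_of_nonpos ha] at h ⊢
  rw [← h]; ring

theorem stmt0 (p c d : ℝ) (hp : 2 ≤ p) (hcd : d ≤ c) :
    2 ^ (2 - p) * (c - d) ^ (p - 1) ≤ spow c (p - 1) - spow d (p - 1) := by
  set q := p - 1 with hqdef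
  have hq : 1 ≤ q := by simp [hqdef]; linarith
  have hcd0 : 0 ≤ c - d := by linarith
  have h2le1 : (2 : ℝ) ^ (2 - p) ≤ 1 :=
    Real.rpow_le_one_of_one_le_of_nonpos (by norm_num) (by linarith)
  have hpow_nonneg : 0 ≤ (c - d) ^ q := Real.rpow_nonneg hcd0 q
  rcases le_or_gt 0 d with hd | hd
  · -- 0 ≤ d ≤ c
    have hc : 0 ≤ c := le_trans hd hcd
    rw [spow_of_nonneg hc hq, spow_of_nonneg hd hq]
    have h := my_superadd hcd0 hd hq
    rw [show c - d + d = c by ring] at h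
    nlinarith [mul_le_of_le_one_left hpow_nonneg h2le1]
  · rcases le_or_gt c 0 with hc | hc
    · -- d ≤ c ≤ 0
      rw [spow_of_nonpos hc hq, spow_of_nonpos (le_of_lt hd) hq]
      have hac : |c| = -c := abs_of_nonpos hc
      have had : |d| = -d := abs_of_nonpos (le_of_lt hd)
      have h := my_superadd hcd0 (abs_nonneg c) hq
      rw [show c - d + |c| = |d| by rw [hac, had]; ring] at h
      nlinarith [mul_le_of_le_one_left hpow_nonneg h2le1]
    · -- d < 0 < c
      rw [spow_of_nonneg (le_of_lt hc) hq, spow_of_nonpos (le_of_lt hd) hq]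
      have had : |d| = -d := abs_of_nonpos (le_of_lt hd)
      have h := my_pow_mean (le_of_lt hc) (abs_nonneg d) hq
      rw [show c + |d| = c - d by rw [had]; ring] at h
      have key : 2 ^ (2 - p) * (2 : ℝ) ^ (q - 1) = 1 := by
        rw [← Real.rpow_add (by norm_num : (0:ℝ) < 2)]
        rw [show 2 - p + (q - 1) = 0 by simp [hqdef]; ring]
        exact Real.rpow_zero 2
      have h2pos : (0 : ℝ) < 2 ^ (2 - p) := Real.rpow_pos_of_pos (by norm_num) _
      calc 2 ^ (2 - p) * (c - d) ^ q ≤ 2 ^ (2 - p) * (2 ^ (q - 1) * (c ^ q + |d| ^ q)) := by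
            exact mul_le_mul_of_nonneg_left h (le_of_lt h2pos)
        _ = c ^ q - -(|d| ^ q) := by rw [← mul_assoc, key]; ring
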